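/- Let k ≥ 4 be even. The generalized power hypergraph G^{k,k/2} of a simple graph G is odd-bipartite if and only if G is bipartite. In particular, for an odd cycle C_{2n+1}, the hypergraph C_{2n+1}^{k,k/2} is non-odd-bipartite. -/
import Mathlib


open Finset BigOperators Classical

/-- The edge set of the generalized power hypergraph `G^{k,k/2}`: each vertex `v` of `G`
is blown up into the set `{v} × Fin (k/2)`, and each edge `uv` of `G` becomes the
`k`-set `({u,v}) × Fin (k/2)`. -/
noncomputable def powEdges {W : Type*} [Fintype W] [DecidableEq W] (G : SimpleGraph W)
    (k : ℕ) : Finset (Finset (W × Fin (k / 2))) :=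
  Finset.image
    (fun p : W × W => ({p.1, p.2} : Finset W) ×ˢ (Finset.univ : Finset (Fin (k / 2))))
    (Finset.univ.filter (fun p : W × W => G.Adj p.1 p.2))

lemma mem_powEdges {W : Type*} [Fintype W] [DecidableEq W] (G : SimpleGraph W)
    (k : ℕ) (e : Finset (W × Fin (k / 2))) :
    e ∈ powEdges G k ↔
      ∃ u v, G.Adj u v ∧ e = ({u, v} : Finset W) ×ˢ (Finset.univ : Finset (Fin (k / 2))) := by
  simp only [powEdges, Finset.mem_image, Finset.mem_filter, Finset.mem_univ, true_and]
  constructor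
  · rintro ⟨⟨a, b⟩, h, rfl⟩
    exact ⟨a, b, h, rfl⟩
  · rintro ⟨a, b, h, rfl⟩
    exact ⟨⟨a, b⟩, h, rfl⟩

lemma powIff {W : Type*} [Fintype W] [DecidableEq W] (G : SimpleGraph W) (k : ℕ)
    (hk4 : 4 ≤ k) :
    (∃ S : Finset (W × Fin (k / 2)), ∀ e ∈ powEdges G k, Odd ((e ∩ S).card)) ↔
      ∃ T : Set W, ∀ u v, G.Adj u v → (u ∈ T ↔ v ∉ T) := by
  have hpos : 0 < k / 2 := by omega
  constructor
  · rintro ⟨S, hS⟩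
    refine ⟨{v | Odd (((({v} : Finset W) ×ˢ (Finset.univ : Finset (Fin (k / 2)))) ∩ S).card)},
      fun u v huv => ?_⟩
    have hne : u ≠ v := huv.ne
    have he : (({u, v} : Finset W) ×ˢ (Finset.univ : Finset (Fin (k / 2)))) ∈ powEdges G k :=
      (mem_powEdges G k _).mpr ⟨u, v, huv, rfl⟩
    have hodd := hS _ he
    have hsplit : (({u, v} : Finset W) ×ˢ (Finset.univ : Finset (Fin (k / 2)))) ∩ S
        = ((({u} : Finset W) ×ˢ Finset.univ) ∩ S) ∪ ((({v} : Finset W) ×ˢ Finset.univ) ∩ S) := by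
      ext ⟨w, i⟩
      simp only [Finset.mem_inter, Finset.mem_union, Finset.mem_product, Finset.mem_insert,
        Finset.mem_singleton, Finset.mem_univ, and_true, true_and, or_and_right]
    have hdisj : Disjoint ((({u} : Finset W) ×ˢ (Finset.univ : Finset (Fin (k / 2)))) ∩ S)
        ((({v} : Finset W) ×ˢ Finset.univ) ∩ S) := by
      refine Finset.disjoint_left.mpr ?_
      rintro ⟨w, i⟩ h1 h2
      simp only [Finset.mem_inter, Finset.mem_product, Finset.mem_singleton] at h1 h2
      exact hne (h1.1.1.symm.trans h2.1.1)
    rw [hsplit, Finset.card_union_of_disjoint hdisj] at hodd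
    have h2 := Nat.odd_add.mp hodd
    simp only [Set.mem_setOf_eq]
    rw [← Nat.not_odd_iff_even] at h2
    tauto
  · rintro ⟨T, hT⟩
    have i0 : Fin (k / 2) := ⟨0, hpos⟩
    refine ⟨Finset.univ.filter (fun x => x.1 ∈ T ∧ x.2 = i0), fun e he => ?_⟩
    obtain ⟨u, v, huv, rfl⟩ := (mem_powEdges G k e).mp he
    have hne : u ≠ v := huv.ne
    have hTuv := hT u v huv
    by_cases hu : u ∈ T
    · have hv : v ∉ T := hTuv.mp hu
      have : (({u, v} : Finset W) ×ˢ (Finset.univ : Finset (Fin (k / 2)))) ∩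
          Finset.univ.filter (fun x => x.1 ∈ T ∧ x.2 = i0) = {(u, i0)} := by
        ext ⟨w, i⟩
        simp only [Finset.mem_inter, Finset.mem_product, Finset.mem_insert,
          Finset.mem_singleton, Finset.mem_filter, Finset.mem_univ, true_and, Prod.mk.injEq]
        constructor
        · rintro ⟨⟨rfl | rfl, -⟩, hw, rfl⟩
          · exact ⟨rfl, rfl⟩
          · exact absurd hw hv
        · rintro ⟨rfl, rfl⟩
          exact ⟨⟨Or.inl rfl, trivial⟩, hu, rfl⟩
      rw [this, Finset.card_singleton]
      exact odd_one
    · have hv : v ∈ T := by tauto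
      have : (({u, v} : Finset W) ×ˢ (Finset.univ : Finset (Fin (k / 2)))) ∩
          Finset.univ.filter (fun x => x.1 ∈ T ∧ x.2 = i0) = {(v, i0)} := by
        ext ⟨w, i⟩
        simp only [Finset.mem_inter, Finset.mem_product, Finset.mem_insert,
          Finset.mem_singleton, Finset.mem_filter, Finset.mem_univ, true_and, Prod.mk.injEq]
        constructor
        · rintro ⟨⟨rfl | rfl, -⟩, hw, rfl⟩
          · exact absurd hw hu
          · exact ⟨rfl, rfl⟩
        · rintro ⟨rfl, rfl⟩
          exact ⟨⟨Or.inr rfl, trivial⟩, hv, rfl⟩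
      rw [this, Finset.card_singleton]
      exact odd_one

/-- For even `k ≥ 4`, the power hypergraph `G^{k,k/2}` is odd-bipartite iff `G` is bipartite;
in particular the power of an odd cycle `C_{2n+1}` is non-odd-bipartite. -/
theorem stmt15 {W : Type*} [Fintype W] [DecidableEq W] (G : SimpleGraph W) (k n : ℕ)
    (hk : Even k) (hk4 : 4 ≤ k) (hn : 1 ≤ n) :
    ((∃ S : Finset (W × Fin (k / 2)), ∀ e ∈ powEdges G k, Odd ((e ∩ S).card)) ↔
      (∃ T : Set W, ∀ u v, G.Adj u v → (u ∈ T ↔ v ∉ T))) ∧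
    ¬ (∃ S : Finset (ZMod (2 * n + 1) × Fin (k / 2)),
        ∀ e ∈ powEdges (SimpleGraph.fromRel (fun i j : ZMod (2 * n + 1) => i = j + 1)) k,
          Odd ((e ∩ S).card)) := by
  haveI : Fact (1 < 2 * n + 1) := ⟨by omega⟩
  refine ⟨powIff G k hk4, fun h => ?_⟩
  obtain ⟨T, hT⟩ := (powIff _ k hk4).mp h
  have hstep : ∀ j : ZMod (2 * n + 1), (j ∈ T ↔ (j + 1) ∉ T) := by
    intro j
    have hne : j + 1 ≠ j := by
      intro hh
      exact one_ne_zero (add_eq_left.mp hh)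
    have hadj : (SimpleGraph.fromRel (fun i j : ZMod (2 * n + 1) => i = j + 1)).Adj (j + 1) j := by
      rw [SimpleGraph.fromRel_adj]
      exact ⟨hne, Or.inl rfl⟩
    have := hT _ _ hadj
    tauto
  have main : ∀ m : ℕ, (((m : ℕ) : ZMod (2 * n + 1)) ∈ T ↔ ((0 : ZMod (2 * n + 1)) ∈ T ↔ Even m)) := by
    intro m
    induction m with
    | zero => simp
    | succ m ih =>
      have := hstep ((m : ℕ) : ZMod (2 * n + 1))
      push_cast
      rw [Nat.even_add_one]
      push_cast at ih
      tauto
  have h1 := main (2 * n + 1)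
  rw [ZMod.natCast_self] at h1
  have h2 : ¬ Even (2 * n + 1) := by simp [Nat.even_add_one, parity_simps]
  tauto
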